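/- Let u₀ ∈ H¹_α(ℝⁿ) with decay character r*(u₀) = r* ∈ (-n/2, ∞) and P_{r*}(u₀) < ∞. Then there exist C₂, C₃ > 0 such that the solution ū of ∂_t(ū - αΔū) - μΔū = 0 with ū(0) = u₀ satisfies ‖ū(t)‖²_{H¹_α(ℝⁿ)} ≤ C₂(t+C₃)^{-(n/2 + r*)} for all t ≥ 0. -/

import Mathlib

/- STATEMENT 10: Upper bound for the linear pseudo-parabolic evolution. If
   u₀ ∈ H¹_α(ℝⁿ) has decay character r* ∈ (-n/2,∞) (indicator limit P with
   0 < P < ∞), then there exist C₂, C₃ > 0 with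
   ‖ū(t)‖²_{H¹_α} ≤ C₂(t+C₃)^{-(n/2+r*)}, where on the Fourier side (Plancherel,
   constants absorbed) ‖ū(t)‖²_{H¹_α} = ∫ (1+α|ξ|²)|e^{-μ|ξ|²t/(1+α|ξ|²)} û₀(ξ)|² dξ. -/

noncomputable section
open MeasureTheory Filter

lemma pow_le_factorial_mul_exp (m : ℕ) {x : ℝ} (hx : 0 ≤ x) :
    x ^ m ≤ m.factorial * Real.exp x := by
  have h := Real.sum_le_exp_of_nonneg hx (m + 1)
  have hterm : x ^ m / (m.factorial : ℝ) ≤ ∑ i ∈ Finset.range (m + 1), x ^ i / (i.factorial : ℝ) :=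
    Finset.single_le_sum (f := fun i => x ^ i / (i.factorial : ℝ))
      (fun i _ => by positivity) (Finset.self_mem_range_succ m)
  have hfac : (0:ℝ) < m.factorial := by positivity
  rw [div_le_iff₀ hfac] at hterm
  calc x ^ m ≤ (∑ i ∈ Finset.range (m + 1), x ^ i / i.factorial) * m.factorial := hterm
    _ ≤ Real.exp x * m.factorial := mul_le_mul_of_nonneg_right h hfac.le
    _ = m.factorial * Real.exp x := by ring

lemma exp_neg_le_factorial_div (m : ℕ) {x : ℝ} (hx : 0 < x) :
    Real.exp (-x) ≤ m.factorial / x ^ m := by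
  have h := pow_le_factorial_mul_exp m hx.le
  rw [Real.exp_neg, inv_le_comm₀ (Real.exp_pos x) (by positivity), inv_div,
    div_le_iff₀ (by positivity : (0:ℝ) < (m.factorial:ℝ))]
  nlinarith [Real.exp_pos x]

open ENNReal in
lemma annulus_weighted_bound {X : Type*} [MeasurableSpace X] (μ : Measure X)
    (nrm : X → ℝ) (hnrm : Measurable nrm) (F : X → ℝ≥0∞)
    (ρ₀ s e K : ℝ) (hs : 0 ≤ s) (hK : 0 ≤ K) (hse : s + e < 0) (he : e ≤ 0)
    (hG : ∀ ρ : ℝ, 0 < ρ → ρ ≤ ρ₀ →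
      ∫⁻ x in nrm ⁻¹' Set.Iic ρ, F x ∂μ ≤ ENNReal.ofReal (K * ρ ^ s)) :
    ∀ ρ : ℝ, 0 < ρ →
      ∫⁻ x in nrm ⁻¹' Set.Ico ρ ρ₀, ENNReal.ofReal (nrm x ^ e) * F x ∂μ ≤
        ENNReal.ofReal (2 ^ s * K / (1 - 2 ^ (s + e)) * ρ ^ (s + e)) := by
  set q : ℝ := 2 ^ (s + e) with hq_def
  have hq1 : q < 1 := Real.rpow_lt_one_of_one_lt_of_neg one_lt_two hse
  have hq0 : 0 < q := Real.rpow_pos_of_pos two_pos _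
  set K' : ℝ := 2 ^ s * K / (1 - q) with hK'_def
  have h2s : (0:ℝ) ≤ 2 ^ s := (Real.rpow_pos_of_pos two_pos s).le
  have hK'0 : 0 ≤ K' := by
    apply div_nonneg (by positivity) (by linarith)
  have key : ∀ N : ℕ, ∀ ρ : ℝ, 0 < ρ → ρ₀ ≤ 2 ^ N * ρ →
      ∫⁻ x in nrm ⁻¹' Set.Ico ρ ρ₀, ENNReal.ofReal (nrm x ^ e) * F x ∂μ ≤
        ENNReal.ofReal (K' * ρ ^ (s + e)) := by
    intro N
    induction N with
    | zero =>
      intro ρ hρ hcov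
      have : nrm ⁻¹' Set.Ico ρ ρ₀ = (∅ : Set X) := by
        ext x
        simp only [Set.mem_preimage, Set.mem_Ico, Set.mem_empty_iff_false, iff_false, not_and,
          not_lt]
        intro h1
        calc ρ₀ ≤ 2 ^ 0 * ρ := hcov
          _ = ρ := by ring
          _ ≤ nrm x := h1
      rw [this]
      simp
    | succ N ih =>
      intro ρ hρ hcov
      by_cases hρρ₀ : ρ₀ ≤ ρ
      · have : nrm ⁻¹' Set.Ico ρ ρ₀ = (∅ : Set X) := by
          ext x
          simp only [Set.mem_preimage, Set.mem_Ico, Set.mem_empty_iff_false, iff_false, not_and,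
            not_lt]
          intro h1
          exact le_trans hρρ₀ h1
        rw [this]; simp
      push_neg at hρρ₀
      set A : Set X := nrm ⁻¹' Set.Ico ρ (min ρ₀ (2 * ρ)) with hA_def
      set B : Set X := nrm ⁻¹' Set.Ico (2 * ρ) ρ₀ with hB_def
      have hAmeas : MeasurableSet A := hnrm measurableSet_Ico
      have hsub : nrm ⁻¹' Set.Ico ρ ρ₀ ⊆ A ∪ B := by
        intro x hx
        simp only [Set.mem_preimage, Set.mem_Ico] at hx
        rcases lt_or_ge (nrm x) (2 * ρ) with h2 | h2
        · left
          simp only [hA_def, Set.mem_preimage, Set.mem_Ico, lt_min_iff]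
          exact ⟨hx.1, hx.2, h2⟩
        · right
          simp only [hB_def, Set.mem_preimage, Set.mem_Ico]
          exact ⟨h2, hx.2⟩
      calc ∫⁻ x in nrm ⁻¹' Set.Ico ρ ρ₀, ENNReal.ofReal (nrm x ^ e) * F x ∂μ
          ≤ ∫⁻ x in A ∪ B, ENNReal.ofReal (nrm x ^ e) * F x ∂μ :=
            lintegral_mono' (Measure.restrict_mono hsub le_rfl) le_rfl
        _ ≤ (∫⁻ x in A, ENNReal.ofReal (nrm x ^ e) * F x ∂μ)
            + ∫⁻ x in B, ENNReal.ofReal (nrm x ^ e) * F x ∂μ := by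
            rw [← lintegral_add_measure]
            exact lintegral_mono' (Measure.restrict_union_le _ _) le_rfl
        _ ≤ ENNReal.ofReal (2 ^ s * K * ρ ^ (s + e)) + ENNReal.ofReal (K' * q * ρ ^ (s + e)) := by
            gcongr
            · -- A piece
              have hstep1 : ∫⁻ x in A, ENNReal.ofReal (nrm x ^ e) * F x ∂μ ≤
                  ∫⁻ x in A, ENNReal.ofReal (ρ ^ e) * F x ∂μ := by
                apply setLIntegral_mono' hAmeas
                intro x hx
                simp only [hA_def, Set.mem_preimage, Set.mem_Ico] at hx
                exact mul_le_mul_left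
                  (ENNReal.ofReal_le_ofReal (Real.rpow_le_rpow_of_nonpos hρ hx.1 he)) _
              have hstep2 : ∫⁻ x in A, ENNReal.ofReal (ρ ^ e) * F x ∂μ =
                  ENNReal.ofReal (ρ ^ e) * ∫⁻ x in A, F x ∂μ :=
                lintegral_const_mul' _ _ ofReal_ne_top
              have hmin_pos : 0 < min ρ₀ (2 * ρ) := lt_min (by linarith) (by linarith)
              have hsubA : A ⊆ nrm ⁻¹' Set.Iic (min ρ₀ (2 * ρ)) := by
                intro x hx
                simp only [hA_def, Set.mem_preimage, Set.mem_Ico] at hx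
                exact le_of_lt hx.2
              have hstep3 : ∫⁻ x in A, F x ∂μ ≤ ENNReal.ofReal (K * (min ρ₀ (2 * ρ)) ^ s) := by
                refine le_trans (lintegral_mono' (Measure.restrict_mono hsubA le_rfl) le_rfl) ?_
                exact hG _ hmin_pos (min_le_left _ _)
              calc ∫⁻ x in A, ENNReal.ofReal (nrm x ^ e) * F x ∂μ
                  ≤ ENNReal.ofReal (ρ ^ e) * ENNReal.ofReal (K * (min ρ₀ (2 * ρ)) ^ s) := by
                    refine le_trans hstep1 ?_
                    rw [hstep2]
                    exact mul_le_mul_right hstep3 _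
                _ ≤ ENNReal.ofReal (ρ ^ e) * ENNReal.ofReal (K * (2 * ρ) ^ s) :=
                    mul_le_mul_right (ENNReal.ofReal_le_ofReal (mul_le_mul_of_nonneg_left
                      (Real.rpow_le_rpow hmin_pos.le (min_le_right _ _) hs) hK)) _
                _ = ENNReal.ofReal (2 ^ s * K * ρ ^ (s + e)) := by
                    rw [← ENNReal.ofReal_mul (Real.rpow_nonneg hρ.le _)]
                    congr 1
                    rw [Real.mul_rpow (by norm_num) hρ.le, Real.rpow_add hρ]
                    ring
            · -- B piece
              have := ih (2 * ρ) (by linarith) (by rw [pow_succ] at hcov; linarith [hcov])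
              refine le_trans this (le_of_eq ?_)
              congr 1
              rw [Real.mul_rpow (by norm_num) hρ.le, hq_def]
              ring
        _ = ENNReal.ofReal (K' * ρ ^ (s + e)) := by
            rw [← ENNReal.ofReal_add (by positivity) (by positivity)]
            congr 1
            have h1q : 1 - q ≠ 0 := by linarith
            have : 2 ^ s * K + K' * q = K' := by
              rw [hK'_def]; field_simp; ring
            nlinarith [this, Real.rpow_nonneg hρ.le (s + e)]
  intro ρ hρ
  obtain ⟨N, hN⟩ := pow_unbounded_of_one_lt (ρ₀ / ρ) (one_lt_two (α := ℝ))
  exact key N ρ hρ (by rw [div_lt_iff₀ hρ] at hN; linarith)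

set_option maxHeartbeats 1600000 in
theorem linear_decay_upper_bound (n : ℕ) (hn : 0 < n) (α μ : ℝ) (hα : 0 < α) (hμ : 0 < μ)
    (u0hat : EuclideanSpace ℝ (Fin n) → EuclideanSpace ℂ (Fin n))
    (hL2 : MemLp u0hat 2 volume)
    (hH1 : MemLp (fun ξ : EuclideanSpace ℝ (Fin n) => ‖ξ‖ * ‖u0hat ξ‖) 2 volume)
    (r P : ℝ) (hr : -((n : ℝ) / 2) < r) (hP : 0 < P)
    (hlim : Tendsto
      (fun ρ : ℝ => ρ ^ (-2 * r - (n : ℝ)) *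
        ∫ ξ in Metric.closedBall (0 : EuclideanSpace ℝ (Fin n)) ρ, ‖u0hat ξ‖ ^ 2)
      (nhdsWithin 0 (Set.Ioi 0)) (nhds P)) :
    ∃ C₂ C₃ : ℝ, 0 < C₂ ∧ 0 < C₃ ∧ ∀ t : ℝ, 0 ≤ t →
      (∫ ξ, (1 + α * ‖ξ‖ ^ 2) *
          ‖Real.exp (-(μ * ‖ξ‖ ^ 2) * t / (1 + α * ‖ξ‖ ^ 2)) • u0hat ξ‖ ^ 2) ≤
        C₂ * (t + C₃) ^ (-((n : ℝ) / 2 + r)) := by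
  classical
  set s : ℝ := (n : ℝ) + 2 * r with hs_def
  have hs_pos : 0 < s := by simp only [hs_def]; linarith
  -- the L² density on the Fourier side
  set f : EuclideanSpace ℝ (Fin n) → ℝ := fun ξ => ‖u0hat ξ‖ ^ 2 with hf_def
  have hf0 : ∀ ξ, 0 ≤ f ξ := fun ξ => sq_nonneg _
  have hfint : Integrable f volume := (memLp_two_iff_integrable_sq_norm hL2.1).mp hL2
  have hφint : Integrable (fun ξ : EuclideanSpace ℝ (Fin n) => (‖ξ‖ * ‖u0hat ξ‖) ^ 2) volume :=
    (memLp_two_iff_integrable_sq hH1.1).mp hH1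
  set w : EuclideanSpace ℝ (Fin n) → ℝ := fun ξ => (1 + α * ‖ξ‖ ^ 2) * f ξ with hw_def
  have hw0 : ∀ ξ, 0 ≤ w ξ := fun ξ => mul_nonneg (by positivity) (hf0 ξ)
  have hwint : Integrable w volume := by
    have h := hfint.add (hφint.const_mul α)
    exact h.congr (Filter.Eventually.of_forall fun ξ => by
      simp only [hw_def, hf_def, mul_pow, Pi.add_apply]; ring)
  set M : ℝ := ∫ ξ, w ξ with hM_def
  have hM0 : 0 ≤ M := integral_nonneg hw0
  have hMe : ∫⁻ ξ, ENNReal.ofReal (w ξ) = ENNReal.ofReal M :=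
    (ofReal_integral_eq_lintegral_ofReal hwint
      (Filter.Eventually.of_forall hw0)).symm
  -- extract ρ₀ from the limit
  obtain ⟨ρ₀, hρ₀pos, hρ₀le1, hGreal⟩ :
      ∃ ρ₀ : ℝ, 0 < ρ₀ ∧ ρ₀ ≤ 1 ∧ ∀ ρ : ℝ, 0 < ρ → ρ ≤ ρ₀ →
        (∫ ξ in Metric.closedBall (0 : EuclideanSpace ℝ (Fin n)) ρ, ‖u0hat ξ‖ ^ 2) ≤
          2 * P * ρ ^ s := by
    have hev := hlim.eventually_lt_const (by linarith : P < 2 * P)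
    rw [eventually_iff, Metric.mem_nhdsWithin_iff] at hev
    obtain ⟨ε, hε, hsub⟩ := hev
    refine ⟨min (ε / 2) 1, by positivity, min_le_right _ _, ?_⟩
    intro ρ hρ hρle
    have hmem : ρ ∈ Metric.ball (0:ℝ) ε ∩ Set.Ioi 0 := by
      constructor
      · rw [Metric.mem_ball, Real.dist_eq, sub_zero, abs_of_pos hρ]
        have := le_trans hρle (min_le_left _ _); linarith
      · exact hρ
    have hρlt := hsub hmem
    simp only [Set.mem_setOf_eq] at hρlt
    have hρs : (0:ℝ) < ρ ^ s := Real.rpow_pos_of_pos hρ s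
    have hexp : -2 * r - (n:ℝ) = -s := by rw [hs_def]; ring
    rw [hexp, Real.rpow_neg hρ.le] at hρlt
    have hGnn : 0 ≤ ∫ ξ in Metric.closedBall (0 : EuclideanSpace ℝ (Fin n)) ρ, ‖u0hat ξ‖ ^ 2 :=
      setIntegral_nonneg measurableSet_closedBall (fun ξ _ => sq_nonneg _)
    rw [inv_mul_lt_iff₀ hρs] at hρlt
    nlinarith
  -- lintegral version of the small-ball bound
  have hball : ∀ ρ : ℝ, (fun ξ : EuclideanSpace ℝ (Fin n) => ‖ξ‖) ⁻¹' Set.Iic ρ =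
      Metric.closedBall 0 ρ := by
    intro ρ; ext ξ; simp [mem_closedBall_zero_iff]
  have hG : ∀ ρ : ℝ, 0 < ρ → ρ ≤ ρ₀ →
      ∫⁻ ξ in (fun ξ : EuclideanSpace ℝ (Fin n) => ‖ξ‖) ⁻¹' Set.Iic ρ,
        ENNReal.ofReal (f ξ) ≤ ENNReal.ofReal (2 * P * ρ ^ s) := by
    intro ρ hρ hρle
    rw [hball ρ, ← ofReal_integral_eq_lintegral_ofReal hfint.restrict
      (Filter.Eventually.of_forall hf0)]
    exact ENNReal.ofReal_le_ofReal (hGreal ρ hρ hρle)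
  -- parameters
  set m : ℕ := n + ⌈r⌉₊ + 1 with hm_def
  have hm : s < 2 * m := by
    have h1 : r ≤ (⌈r⌉₊ : ℝ) := Nat.le_ceil r
    have h2 : (m : ℝ) = (n : ℝ) + (⌈r⌉₊ : ℝ) + 1 := by rw [hm_def]; push_cast; ring
    rw [hs_def]; rw [h2]; have : (0:ℝ) ≤ n := Nat.cast_nonneg n; linarith
  set e : ℝ := -(2 * (m : ℝ)) with he_def
  have hse : s + e < 0 := by rw [he_def]; linarith
  have he0 : e ≤ 0 := by rw [he_def]; have : (0:ℝ) ≤ (m:ℝ) := Nat.cast_nonneg m; linarith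
  -- constants
  have h1α : (0:ℝ) < 1 + α := by linarith
  set c : ℝ := μ / (1 + α) with hc_def
  have hc : 0 < c := div_pos hμ h1α
  set D : ℝ := m.factorial / (2 * c) ^ m with hD_def
  have hD : 0 < D := by positivity
  set c₀ : ℝ := μ * ρ₀ ^ 2 / (1 + α * ρ₀ ^ 2) with hc₀_def
  have hd₀ : (0:ℝ) < 1 + α * ρ₀ ^ 2 := by positivity
  have hc₀ : 0 < c₀ := by positivity
  set D₀ : ℝ := m.factorial / (2 * c₀) ^ m with hD₀_def
  have hD₀ : 0 < D₀ := by positivity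
  have hq1 : (2:ℝ) ^ (s + e) < 1 := Real.rpow_lt_one_of_one_lt_of_neg one_lt_two hse
  have hq0 : (0:ℝ) < 2 ^ (s + e) := Real.rpow_pos_of_pos two_pos _
  set K' : ℝ := 2 ^ s * (2 * P) / (1 - 2 ^ (s + e)) with hK'_def
  have hK'0 : 0 ≤ K' := div_nonneg (by positivity) (by linarith)
  set C₃ : ℝ := 1 + (ρ₀⁻¹) ^ 2 with hC₃_def
  have hC₃1 : 1 ≤ C₃ := le_add_of_nonneg_right (sq_nonneg _)
  have hC₃pos : 0 < C₃ := lt_of_lt_of_le one_pos hC₃1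
  set a1 : ℝ := (1 + α) * (2 * P) with ha1_def
  set a2 : ℝ := (1 + α) * D * K' * 2 ^ m with ha2_def
  set a3 : ℝ := D₀ * M * 2 ^ m with ha3_def
  have ha1 : 0 ≤ a1 := by positivity
  have ha2 : 0 ≤ a2 := mul_nonneg (mul_nonneg (mul_nonneg h1α.le hD.le) hK'0) (by positivity)
  have ha3 : 0 ≤ a3 := mul_nonneg (mul_nonneg hD₀.le hM0) (by positivity)
  set C₂ : ℝ := a1 + a2 + a3 + M * (2 * C₃) ^ (s / 2) + 1 with hC₂_def
  have hMC : 0 ≤ M * (2 * C₃) ^ (s / 2) := mul_nonneg hM0 (Real.rpow_nonneg (by linarith) _)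
  have hC₂pos : 0 < C₂ := by rw [hC₂_def]; linarith
  refine ⟨C₂, C₃, hC₂pos, hC₃pos, ?_⟩
  intro t ht
  have hexp_eq : -((n : ℝ) / 2 + r) = -(s / 2) := by rw [hs_def]; ring
  rw [hexp_eq]
  set X : ℝ := t + C₃ with hX_def
  have hX0 : 0 < X := by rw [hX_def]; linarith
  have hX1 : 1 ≤ X := by rw [hX_def]; linarith
  have hXs : 0 ≤ X ^ (-(s/2)) := (Real.rpow_pos_of_pos hX0 _).le
  set Φ : EuclideanSpace ℝ (Fin n) → ℝ :=
    fun ξ => -(μ * ‖ξ‖ ^ 2) * t / (1 + α * ‖ξ‖ ^ 2) with hΦ_def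
  set g : EuclideanSpace ℝ (Fin n) → ℝ :=
    fun ξ => (1 + α * ‖ξ‖ ^ 2) *
      ‖Real.exp (-(μ * ‖ξ‖ ^ 2) * t / (1 + α * ‖ξ‖ ^ 2)) • u0hat ξ‖ ^ 2 with hg_def
  have hgΦ : ∀ ξ, g ξ = (1 + α * ‖ξ‖ ^ 2) * ‖Real.exp (Φ ξ) • u0hat ξ‖ ^ 2 :=
    fun ξ => rfl
  have hΦapp : ∀ ξ, Φ ξ = -(μ * ‖ξ‖ ^ 2) * t / (1 + α * ‖ξ‖ ^ 2) := fun ξ => rfl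
  have hden : ∀ ξ : EuclideanSpace ℝ (Fin n), 0 < 1 + α * ‖ξ‖ ^ 2 := fun ξ => by positivity
  have hg_eq : ∀ ξ, g ξ = (1 + α * ‖ξ‖ ^ 2) * Real.exp (2 * Φ ξ) * f ξ := by
    intro ξ
    rw [hgΦ ξ]
    simp only [hf_def, norm_smul, Real.norm_eq_abs,
      abs_of_pos (Real.exp_pos _), mul_pow]
    rw [show (2:ℝ) * Φ ξ = ((2:ℕ):ℝ) * Φ ξ by norm_num, Real.exp_nat_mul]
    ring
  have hg0 : ∀ ξ, 0 ≤ g ξ := fun ξ => mul_nonneg (hden ξ).le (sq_nonneg _)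
  have hΦ0 : ∀ ξ, Φ ξ ≤ 0 := by
    intro ξ
    have h1 : -(μ * ‖ξ‖ ^ 2) * t ≤ 0 := by
      have h2 := mul_nonneg (mul_nonneg hμ.le (sq_nonneg ‖ξ‖)) ht
      linarith
    exact div_nonpos_of_nonpos_of_nonneg h1 (hden ξ).le
  have hE1 : ∀ ξ, Real.exp (2 * Φ ξ) ≤ 1 := fun ξ =>
    Real.exp_le_one_iff.mpr (by linarith [hΦ0 ξ])
  have hg_le_w : ∀ ξ, g ξ ≤ w ξ := by
    intro ξ
    rw [hg_eq ξ]
    simp only [hw_def]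
    calc (1 + α * ‖ξ‖ ^ 2) * Real.exp (2 * Φ ξ) * f ξ
        ≤ (1 + α * ‖ξ‖ ^ 2) * 1 * f ξ :=
          mul_le_mul_of_nonneg_right
            (mul_le_mul_of_nonneg_left (hE1 ξ) (hden ξ).le) (hf0 ξ)
      _ = (1 + α * ‖ξ‖ ^ 2) * f ξ := by ring
  have hΦcont : Continuous Φ := by
    apply Continuous.div
    · fun_prop
    · fun_prop
    · exact fun ξ => (hden ξ).ne'
  have hgmeas : AEStronglyMeasurable g volume := by
    have h1 : AEStronglyMeasurable (fun ξ => Real.exp (Φ ξ) • u0hat ξ) volume :=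
      ((Real.continuous_exp.comp hΦcont).aestronglyMeasurable).smul hL2.1
    have h2 : AEStronglyMeasurable
        (fun ξ => ‖Real.exp (Φ ξ) • u0hat ξ‖ ^ 2) volume :=
      (h1.norm.mul h1.norm).congr (Filter.Eventually.of_forall fun ξ => (sq _).symm)
    have h3 : AEStronglyMeasurable
        (fun ξ : EuclideanSpace ℝ (Fin n) =>
          (1 + α * ‖ξ‖ ^ 2) * ‖Real.exp (Φ ξ) • u0hat ξ‖ ^ 2) volume :=
      ((continuous_const.add
        (continuous_const.mul (by fun_prop))).aestronglyMeasurable).mul h2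
    exact h3.congr (Filter.Eventually.of_forall fun ξ => (hgΦ ξ).symm)
  have hgint : Integrable g volume := by
    refine hwint.mono' hgmeas (Filter.Eventually.of_forall fun ξ => ?_)
    rw [Real.norm_eq_abs, abs_of_nonneg (hg0 ξ)]
    exact hg_le_w ξ
  suffices hmain : ∫⁻ ξ, ENNReal.ofReal (g ξ) ≤ ENNReal.ofReal (C₂ * X ^ (-(s/2))) by
    have h1 : ENNReal.ofReal (∫ ξ, g ξ) = ∫⁻ ξ, ENNReal.ofReal (g ξ) :=
      ofReal_integral_eq_lintegral_ofReal hgint (Filter.Eventually.of_forall hg0)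
    have h2 : 0 ≤ C₂ * X ^ (-(s/2)) := mul_nonneg hC₂pos.le hXs
    exact (ENNReal.ofReal_le_ofReal_iff h2).mp (h1 ▸ hmain)
  rcases le_or_gt t C₃ with hcase | hcase
  · -- small time: trivial bound by M
    have hb : ∫⁻ ξ, ENNReal.ofReal (g ξ) ≤ ENNReal.ofReal M := by
      rw [← hMe]
      exact lintegral_mono fun ξ => ENNReal.ofReal_le_ofReal (hg_le_w ξ)
    refine le_trans hb (ENNReal.ofReal_le_ofReal ?_)
    have h2C₃ : (0:ℝ) < 2 * C₃ := by linarith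
    have hXle : X ≤ 2 * C₃ := by rw [hX_def]; linarith
    have h1 : (2*C₃) ^ (-(s/2)) ≤ X ^ (-(s/2)) :=
      Real.rpow_le_rpow_of_nonpos hX0 hXle (by linarith [hs_pos])
    have h2 : (2*C₃) ^ (s/2) * (2*C₃) ^ (-(s/2)) = 1 := by
      rw [← Real.rpow_add h2C₃]
      norm_num
    have h3 : M * (2*C₃) ^ (s/2) ≤ C₂ := by rw [hC₂_def]; linarith
    have h4 : 0 ≤ (2*C₃) ^ (-(s/2)) := (Real.rpow_pos_of_pos h2C₃ _).le
    calc M = (M * (2*C₃) ^ (s/2)) * (2*C₃) ^ (-(s/2)) := by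
          rw [mul_assoc, h2, mul_one]
      _ ≤ C₂ * (2*C₃) ^ (-(s/2)) := mul_le_mul_of_nonneg_right h3 h4
      _ ≤ C₂ * X ^ (-(s/2)) := mul_le_mul_of_nonneg_left h1 hC₂pos.le
  · -- large time
    have ht' : 0 < t := lt_trans hC₃pos hcase
    have htm : (0:ℝ) < t ^ m := pow_pos ht' m
    have hX2t : X ≤ 2 * t := by rw [hX_def]; linarith
    have hXt : X ^ m ≤ 2 ^ m * t ^ m := by
      calc X ^ m ≤ (2*t) ^ m := pow_le_pow_left₀ hX0.le hX2t m
        _ = 2 ^ m * t ^ m := mul_pow 2 t m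
    set ρt : ℝ := X ^ (-(1:ℝ)/2) with hρt_def
    have hρt_pos : 0 < ρt := Real.rpow_pos_of_pos hX0 _
    have hρt_le1 : ρt ≤ 1 := by
      rw [hρt_def]
      calc X ^ (-(1:ℝ)/2) ≤ (1:ℝ) ^ (-(1:ℝ)/2) :=
            Real.rpow_le_rpow_of_nonpos one_pos hX1 (by norm_num)
        _ = 1 := Real.one_rpow _
    have hρtρ₀ : ρt ≤ ρ₀ := by
      have hXinv : ρ₀⁻¹ * ρ₀⁻¹ ≤ X := by
        have h1 : (ρ₀⁻¹)^2 ≤ C₃ := by rw [hC₃_def]; linarith [sq_nonneg (ρ₀⁻¹)]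
        have h2 : ρ₀⁻¹ * ρ₀⁻¹ = (ρ₀⁻¹)^2 := (sq ρ₀⁻¹).symm
        rw [hX_def]; linarith
      have hρtsq : ρt * ρt = X⁻¹ := by
        rw [hρt_def, ← Real.rpow_add hX0]
        norm_num [Real.rpow_neg_one]
      have hXinv' : X⁻¹ ≤ ρ₀ * ρ₀ := by
        have hinvpos : 0 < ρ₀⁻¹ * ρ₀⁻¹ := by positivity
        have := inv_anti₀ hinvpos hXinv
        rwa [mul_inv, inv_inv] at this
      by_contra hcon
      push_neg at hcon
      have h5 : ρ₀ * ρ₀ < ρt * ρt := by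
        apply mul_lt_mul'' hcon hcon hρ₀pos.le hρ₀pos.le
      rw [hρtsq] at h5
      linarith
    have hρts : ρt ^ s = X ^ (-(s/2)) := by
      rw [hρt_def, ← Real.rpow_mul hX0.le, show (-(1:ℝ)/2 * s) = -(s/2) by ring]
    have hρtse : ρt ^ (s + e) = X ^ ((m:ℝ) - s/2) := by
      rw [hρt_def, ← Real.rpow_mul hX0.le,
        show (-(1:ℝ)/2 * (s + e)) = (m:ℝ) - s/2 by rw [he_def]; ring]
    -- splitting of the frequency space
    have hcover : (Set.univ : Set (EuclideanSpace ℝ (Fin n))) =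
        ((fun ξ : EuclideanSpace ℝ (Fin n) => ‖ξ‖) ⁻¹' Set.Iic ρt) ∪
          (((fun ξ : EuclideanSpace ℝ (Fin n) => ‖ξ‖) ⁻¹' Set.Ico ρt ρ₀) ∪
            ((fun ξ : EuclideanSpace ℝ (Fin n) => ‖ξ‖) ⁻¹' Set.Ici ρ₀)) := by
      ext ξ
      simp only [Set.mem_univ, Set.mem_union, Set.mem_preimage, Set.mem_Iic, Set.mem_Ico,
        Set.mem_Ici, true_iff]
      rcases le_or_gt ‖ξ‖ ρt with h | h
      · exact Or.inl h
      rcases lt_or_ge ‖ξ‖ ρ₀ with h2 | h2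
      · exact Or.inr (Or.inl ⟨h.le, h2⟩)
      · exact Or.inr (Or.inr h2)
    have hsplit : ∫⁻ ξ, ENNReal.ofReal (g ξ) ≤
        (∫⁻ ξ in (fun ξ : EuclideanSpace ℝ (Fin n) => ‖ξ‖) ⁻¹' Set.Iic ρt,
          ENNReal.ofReal (g ξ)) +
        ((∫⁻ ξ in (fun ξ : EuclideanSpace ℝ (Fin n) => ‖ξ‖) ⁻¹' Set.Ico ρt ρ₀,
          ENNReal.ofReal (g ξ)) +
        (∫⁻ ξ in (fun ξ : EuclideanSpace ℝ (Fin n) => ‖ξ‖) ⁻¹' Set.Ici ρ₀,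
          ENNReal.ofReal (g ξ))) := by
      calc ∫⁻ ξ, ENNReal.ofReal (g ξ)
          = ∫⁻ ξ in Set.univ, ENNReal.ofReal (g ξ) := by rw [Measure.restrict_univ]
        _ = ∫⁻ ξ in ((fun ξ : EuclideanSpace ℝ (Fin n) => ‖ξ‖) ⁻¹' Set.Iic ρt) ∪
              (((fun ξ : EuclideanSpace ℝ (Fin n) => ‖ξ‖) ⁻¹' Set.Ico ρt ρ₀) ∪
                ((fun ξ : EuclideanSpace ℝ (Fin n) => ‖ξ‖) ⁻¹' Set.Ici ρ₀)),
              ENNReal.ofReal (g ξ) := by rw [← hcover]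
        _ ≤ _ := by
            have hstep : ∀ (A B : Set (EuclideanSpace ℝ (Fin n))),
                ∫⁻ ξ in A ∪ B, ENNReal.ofReal (g ξ) ≤
                  (∫⁻ ξ in A, ENNReal.ofReal (g ξ)) + ∫⁻ ξ in B, ENNReal.ofReal (g ξ) := by
              intro A B
              rw [← lintegral_add_measure]
              exact lintegral_mono' (Measure.restrict_union_le _ _) le_rfl
            refine le_trans (hstep _ _) (add_le_add_right (hstep _ _) _)
    -- Piece 1 : low frequencies
    have hP1 : ∫⁻ ξ in (fun ξ : EuclideanSpace ℝ (Fin n) => ‖ξ‖) ⁻¹' Set.Iic ρt,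
        ENNReal.ofReal (g ξ) ≤ ENNReal.ofReal (a1 * X ^ (-(s/2))) := by
      have hpt : ∀ ξ ∈ (fun ξ : EuclideanSpace ℝ (Fin n) => ‖ξ‖) ⁻¹' Set.Iic ρt,
          ENNReal.ofReal (g ξ) ≤ ENNReal.ofReal (1 + α) * ENNReal.ofReal (f ξ) := by
        intro ξ hξ
        simp only [Set.mem_preimage, Set.mem_Iic] at hξ
        rw [← ENNReal.ofReal_mul h1α.le]
        apply ENNReal.ofReal_le_ofReal
        rw [hg_eq ξ]
        have hξle1 : ‖ξ‖ ≤ 1 := le_trans hξ hρt_le1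
        have hA1 : ‖ξ‖ ^ 2 ≤ 1 := pow_le_one₀ (norm_nonneg ξ) hξle1
        have hd1 : 1 + α * ‖ξ‖ ^ 2 ≤ 1 + α := by
          have := mul_le_of_le_one_right hα.le hA1; linarith
        have h1 : (1 + α * ‖ξ‖ ^ 2) * Real.exp (2 * Φ ξ) ≤ (1 + α) * 1 :=
          mul_le_mul hd1 (hE1 ξ) (Real.exp_pos _).le h1α.le
        calc (1 + α * ‖ξ‖ ^ 2) * Real.exp (2 * Φ ξ) * f ξ
            ≤ ((1 + α) * 1) * f ξ := mul_le_mul_of_nonneg_right h1 (hf0 ξ)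
          _ = (1 + α) * f ξ := by ring
      calc ∫⁻ ξ in (fun ξ : EuclideanSpace ℝ (Fin n) => ‖ξ‖) ⁻¹' Set.Iic ρt,
            ENNReal.ofReal (g ξ)
          ≤ ∫⁻ ξ in (fun ξ : EuclideanSpace ℝ (Fin n) => ‖ξ‖) ⁻¹' Set.Iic ρt,
            ENNReal.ofReal (1 + α) * ENNReal.ofReal (f ξ) :=
            setLIntegral_mono' (measurable_norm measurableSet_Iic) hpt
        _ = ENNReal.ofReal (1 + α) *
            ∫⁻ ξ in (fun ξ : EuclideanSpace ℝ (Fin n) => ‖ξ‖) ⁻¹' Set.Iic ρt,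
              ENNReal.ofReal (f ξ) := lintegral_const_mul' _ _ ENNReal.ofReal_ne_top
        _ ≤ ENNReal.ofReal (1 + α) * ENNReal.ofReal (2 * P * ρt ^ s) :=
            mul_le_mul_right (hG ρt hρt_pos hρtρ₀) _
        _ = ENNReal.ofReal (a1 * X ^ (-(s/2))) := by
            rw [← ENNReal.ofReal_mul h1α.le]
            congr 1
            rw [hρts, ha1_def]
            ring
    -- Piece 2 : middle frequencies
    have hP2 : ∫⁻ ξ in (fun ξ : EuclideanSpace ℝ (Fin n) => ‖ξ‖) ⁻¹' Set.Ico ρt ρ₀,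
        ENNReal.ofReal (g ξ) ≤ ENNReal.ofReal (a2 * X ^ (-(s/2))) := by
      have hconst_nn : (0:ℝ) ≤ (1 + α) * D * (t ^ m)⁻¹ :=
        mul_nonneg (mul_nonneg h1α.le hD.le) (inv_nonneg.mpr htm.le)
      have hcμ : c * (1 + α) = μ := by rw [hc_def]; field_simp
      have hpt : ∀ ξ ∈ (fun ξ : EuclideanSpace ℝ (Fin n) => ‖ξ‖) ⁻¹' Set.Ico ρt ρ₀,
          ENNReal.ofReal (g ξ) ≤ ENNReal.ofReal ((1 + α) * D * (t ^ m)⁻¹) *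
            (ENNReal.ofReal (‖ξ‖ ^ e) * ENNReal.ofReal (f ξ)) := by
        intro ξ hξ
        simp only [Set.mem_preimage, Set.mem_Ico] at hξ
        have hξpos : 0 < ‖ξ‖ := lt_of_lt_of_le hρt_pos hξ.1
        have hξle1 : ‖ξ‖ ≤ 1 := le_trans hξ.2.le hρ₀le1
        have hA1 : ‖ξ‖ ^ 2 ≤ 1 := pow_le_one₀ (norm_nonneg ξ) hξle1
        have hAd : c * t * ‖ξ‖ ^ 2 * (1 + α * ‖ξ‖ ^ 2) ≤ μ * ‖ξ‖ ^ 2 * t := by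
          have e2 : μ * ‖ξ‖ ^ 2 * t = c * t * ‖ξ‖ ^ 2 + c * t * ‖ξ‖ ^ 2 * α := by
            rw [← hcμ]; ring
          have e3 : (c * t * ‖ξ‖ ^ 2 * α) * ‖ξ‖ ^ 2 ≤ c * t * ‖ξ‖ ^ 2 * α := by
            have h := mul_le_mul_of_nonneg_left hA1
              (mul_nonneg (mul_nonneg (mul_nonneg hc.le ht'.le) (sq_nonneg ‖ξ‖)) hα.le)
            linarith
          have e4 : c * t * ‖ξ‖ ^ 2 * (1 + α * ‖ξ‖ ^ 2)
              = c * t * ‖ξ‖ ^ 2 + (c * t * ‖ξ‖ ^ 2 * α) * ‖ξ‖ ^ 2 := by ring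
          linarith
        have hΦle : Φ ξ ≤ -(c * t * ‖ξ‖ ^ 2) := by
          rw [hΦapp ξ, div_le_iff₀ (hden ξ)]
          have e5 : -(c * t * ‖ξ‖ ^ 2) * (1 + α * ‖ξ‖ ^ 2)
              = -(c * t * ‖ξ‖ ^ 2 * (1 + α * ‖ξ‖ ^ 2)) := by ring
          have e6 : -(μ * ‖ξ‖ ^ 2) * t = -(μ * ‖ξ‖ ^ 2 * t) := by ring
          linarith
        have hEb : Real.exp (2 * Φ ξ) ≤ D * (t ^ m)⁻¹ * ‖ξ‖ ^ e := by
          have h1 : Real.exp (2 * Φ ξ) ≤ Real.exp (-(2 * c * t * ‖ξ‖ ^ 2)) :=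
            Real.exp_le_exp.mpr (by linarith)
          have hxpos : (0:ℝ) < 2 * c * t * ‖ξ‖ ^ 2 :=
            mul_pos (mul_pos (mul_pos two_pos hc) ht') (pow_pos hξpos 2)
          have h2 := exp_neg_le_factorial_div m hxpos
          have hxe : ‖ξ‖ ^ e = ((‖ξ‖ ^ 2) ^ m)⁻¹ := by
            rw [he_def, show (2 * (m:ℝ)) = ((2 * m : ℕ) : ℝ) by push_cast; ring,
              Real.rpow_neg (norm_nonneg ξ), Real.rpow_natCast, pow_mul]
          have h3 : (m.factorial : ℝ) / (2 * c * t * ‖ξ‖ ^ 2) ^ m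
              = D * (t ^ m)⁻¹ * ‖ξ‖ ^ e := by
            rw [hxe, hD_def,
              show (2 * c * t * ‖ξ‖ ^ 2) ^ m = (2 * c) ^ m * t ^ m * (‖ξ‖ ^ 2) ^ m by
                rw [← mul_pow, ← mul_pow]]
            rw [div_eq_mul_inv, div_eq_mul_inv, mul_inv, mul_inv]
            ring
          calc Real.exp (2 * Φ ξ) ≤ Real.exp (-(2 * c * t * ‖ξ‖ ^ 2)) := h1
            _ ≤ (m.factorial : ℝ) / (2 * c * t * ‖ξ‖ ^ 2) ^ m := h2
            _ = D * (t ^ m)⁻¹ * ‖ξ‖ ^ e := h3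
        have hreal : g ξ ≤ (1 + α) * D * (t ^ m)⁻¹ * (‖ξ‖ ^ e * f ξ) := by
          rw [hg_eq ξ]
          have hd1 : 1 + α * ‖ξ‖ ^ 2 ≤ 1 + α := by
            have := mul_le_of_le_one_right hα.le hA1; linarith
          calc (1 + α * ‖ξ‖ ^ 2) * Real.exp (2 * Φ ξ) * f ξ
              ≤ ((1 + α) * (D * (t ^ m)⁻¹ * ‖ξ‖ ^ e)) * f ξ :=
              mul_le_mul_of_nonneg_right
                (mul_le_mul hd1 hEb (Real.exp_pos _).le h1α.le) (hf0 ξ)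
            _ = (1 + α) * D * (t ^ m)⁻¹ * (‖ξ‖ ^ e * f ξ) := by ring
        calc ENNReal.ofReal (g ξ)
            ≤ ENNReal.ofReal ((1 + α) * D * (t ^ m)⁻¹ * (‖ξ‖ ^ e * f ξ)) :=
              ENNReal.ofReal_le_ofReal hreal
          _ = ENNReal.ofReal ((1 + α) * D * (t ^ m)⁻¹) *
              (ENNReal.ofReal (‖ξ‖ ^ e) * ENNReal.ofReal (f ξ)) := by
              rw [ENNReal.ofReal_mul hconst_nn,
                ENNReal.ofReal_mul (Real.rpow_nonneg (norm_nonneg ξ) _)]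
      have hann := annulus_weighted_bound volume
        (fun ξ : EuclideanSpace ℝ (Fin n) => ‖ξ‖) measurable_norm
        (fun ξ => ENNReal.ofReal (f ξ)) ρ₀ s e (2 * P) hs_pos.le (by positivity) hse he0
        hG ρt hρt_pos
      rw [← hK'_def] at hann
      have hreal2 : (1 + α) * D * (t ^ m)⁻¹ * (K' * ρt ^ (s + e)) ≤ a2 * X ^ (-(s/2)) := by
        rw [hρtse, show (m:ℝ) - s/2 = (m:ℝ) + (-(s/2)) by ring, Real.rpow_add hX0,
          Real.rpow_natCast]
        have hkey2 : (t ^ m)⁻¹ * X ^ m ≤ 2 ^ m := by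
          rw [inv_mul_le_iff₀ htm]
          linarith [hXt]
        calc (1 + α) * D * (t ^ m)⁻¹ * (K' * (X ^ m * X ^ (-(s/2))))
            = ((1 + α) * D * K') * ((t ^ m)⁻¹ * X ^ m) * X ^ (-(s/2)) := by ring
          _ ≤ ((1 + α) * D * K') * 2 ^ m * X ^ (-(s/2)) :=
              mul_le_mul_of_nonneg_right
                (mul_le_mul_of_nonneg_left hkey2
                  (mul_nonneg (mul_nonneg h1α.le hD.le) hK'0)) hXs
          _ = a2 * X ^ (-(s/2)) := by rw [ha2_def]
      calc ∫⁻ ξ in (fun ξ : EuclideanSpace ℝ (Fin n) => ‖ξ‖) ⁻¹' Set.Ico ρt ρ₀,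
            ENNReal.ofReal (g ξ)
          ≤ ∫⁻ ξ in (fun ξ : EuclideanSpace ℝ (Fin n) => ‖ξ‖) ⁻¹' Set.Ico ρt ρ₀,
            ENNReal.ofReal ((1 + α) * D * (t ^ m)⁻¹) *
              (ENNReal.ofReal (‖ξ‖ ^ e) * ENNReal.ofReal (f ξ)) :=
            setLIntegral_mono' (measurable_norm measurableSet_Ico) hpt
        _ = ENNReal.ofReal ((1 + α) * D * (t ^ m)⁻¹) *
            ∫⁻ ξ in (fun ξ : EuclideanSpace ℝ (Fin n) => ‖ξ‖) ⁻¹' Set.Ico ρt ρ₀,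
              ENNReal.ofReal (‖ξ‖ ^ e) * ENNReal.ofReal (f ξ) :=
            lintegral_const_mul' _ _ ENNReal.ofReal_ne_top
        _ ≤ ENNReal.ofReal ((1 + α) * D * (t ^ m)⁻¹) *
            ENNReal.ofReal (K' * ρt ^ (s + e)) := mul_le_mul_right hann _
        _ = ENNReal.ofReal ((1 + α) * D * (t ^ m)⁻¹ * (K' * ρt ^ (s + e))) :=
            (ENNReal.ofReal_mul hconst_nn).symm
        _ ≤ ENNReal.ofReal (a2 * X ^ (-(s/2))) := ENNReal.ofReal_le_ofReal hreal2
    -- Piece 3 : high frequencies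
    have hP3 : ∫⁻ ξ in (fun ξ : EuclideanSpace ℝ (Fin n) => ‖ξ‖) ⁻¹' Set.Ici ρ₀,
        ENNReal.ofReal (g ξ) ≤ ENNReal.ofReal (a3 * X ^ (-(s/2))) := by
      have hconst_nn : (0:ℝ) ≤ D₀ * (t ^ m)⁻¹ :=
        mul_nonneg hD₀.le (inv_nonneg.mpr htm.le)
      have hpt : ∀ ξ ∈ (fun ξ : EuclideanSpace ℝ (Fin n) => ‖ξ‖) ⁻¹' Set.Ici ρ₀,
          ENNReal.ofReal (g ξ) ≤
            ENNReal.ofReal (D₀ * (t ^ m)⁻¹) * ENNReal.ofReal (w ξ) := by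
        intro ξ hξ
        simp only [Set.mem_preimage, Set.mem_Ici] at hξ
        have hsq : ρ₀ ^ 2 ≤ ‖ξ‖ ^ 2 := pow_le_pow_left₀ hρ₀pos.le hξ 2
        have hkey3 : c₀ * (1 + α * ‖ξ‖ ^ 2) ≤ μ * ‖ξ‖ ^ 2 := by
          rw [hc₀_def, div_mul_eq_mul_div, div_le_iff₀ hd₀]
          have h5 : μ * ρ₀ ^ 2 ≤ μ * ‖ξ‖ ^ 2 := mul_le_mul_of_nonneg_left hsq hμ.le
          have e7 : μ * ρ₀ ^ 2 * (1 + α * ‖ξ‖ ^ 2)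
              = μ * ρ₀ ^ 2 + μ * α * (ρ₀ ^ 2 * ‖ξ‖ ^ 2) := by ring
          have e8 : μ * ‖ξ‖ ^ 2 * (1 + α * ρ₀ ^ 2)
              = μ * ‖ξ‖ ^ 2 + μ * α * (ρ₀ ^ 2 * ‖ξ‖ ^ 2) := by ring
          linarith
        have hΦle : Φ ξ ≤ -(c₀ * t) := by
          rw [hΦapp ξ, div_le_iff₀ (hden ξ)]
          have h6 := mul_le_mul_of_nonneg_right hkey3 ht'.le
          have e9 : -(c₀ * t) * (1 + α * ‖ξ‖ ^ 2)
              = -(c₀ * (1 + α * ‖ξ‖ ^ 2) * t) := by ring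
          have e10 : -(μ * ‖ξ‖ ^ 2) * t = -(μ * ‖ξ‖ ^ 2 * t) := by ring
          linarith
        have hEb : Real.exp (2 * Φ ξ) ≤ D₀ * (t ^ m)⁻¹ := by
          have h1 : Real.exp (2 * Φ ξ) ≤ Real.exp (-(2 * c₀ * t)) :=
            Real.exp_le_exp.mpr (by linarith)
          have hxpos : (0:ℝ) < 2 * c₀ * t := mul_pos (mul_pos two_pos hc₀) ht'
          have h2 := exp_neg_le_factorial_div m hxpos
          have h3 : (m.factorial : ℝ) / (2 * c₀ * t) ^ m = D₀ * (t ^ m)⁻¹ := by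
            rw [hD₀_def, show (2 * c₀ * t) ^ m = (2 * c₀) ^ m * t ^ m from mul_pow _ _ m]
            rw [div_eq_mul_inv, div_eq_mul_inv, mul_inv]
            ring
          calc Real.exp (2 * Φ ξ) ≤ Real.exp (-(2 * c₀ * t)) := h1
            _ ≤ (m.factorial : ℝ) / (2 * c₀ * t) ^ m := h2
            _ = D₀ * (t ^ m)⁻¹ := h3
        have hreal : g ξ ≤ D₀ * (t ^ m)⁻¹ * w ξ := by
          rw [hg_eq ξ]
          simp only [hw_def]
          calc (1 + α * ‖ξ‖ ^ 2) * Real.exp (2 * Φ ξ) * f ξ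
              ≤ (1 + α * ‖ξ‖ ^ 2) * (D₀ * (t ^ m)⁻¹) * f ξ :=
              mul_le_mul_of_nonneg_right
                (mul_le_mul_of_nonneg_left hEb (hden ξ).le) (hf0 ξ)
            _ = D₀ * (t ^ m)⁻¹ * ((1 + α * ‖ξ‖ ^ 2) * f ξ) := by ring
        calc ENNReal.ofReal (g ξ)
            ≤ ENNReal.ofReal (D₀ * (t ^ m)⁻¹ * w ξ) := ENNReal.ofReal_le_ofReal hreal
          _ = ENNReal.ofReal (D₀ * (t ^ m)⁻¹) * ENNReal.ofReal (w ξ) :=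
              ENNReal.ofReal_mul hconst_nn
      have hreal3 : D₀ * (t ^ m)⁻¹ * M ≤ a3 * X ^ (-(s/2)) := by
        have hXmpos : (0:ℝ) < X ^ m := pow_pos hX0 m
        have hXm_inv : (t ^ m)⁻¹ ≤ 2 ^ m * X ^ (-(m:ℝ)) := by
          rw [Real.rpow_neg hX0.le, Real.rpow_natCast]
          calc (t ^ m)⁻¹ = (2:ℝ) ^ m * ((2:ℝ) ^ m * t ^ m)⁻¹ := by
                field_simp
            _ ≤ 2 ^ m * (X ^ m)⁻¹ :=
                mul_le_mul_of_nonneg_left (inv_anti₀ hXmpos hXt) (by positivity)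
        have hXms : X ^ (-(m:ℝ)) ≤ X ^ (-(s/2)) :=
          Real.rpow_le_rpow_of_exponent_le hX1 (by linarith)
        have hXmnn : (0:ℝ) ≤ X ^ (-(m:ℝ)) := (Real.rpow_pos_of_pos hX0 _).le
        calc D₀ * (t ^ m)⁻¹ * M ≤ D₀ * (2 ^ m * X ^ (-(m:ℝ))) * M :=
              mul_le_mul_of_nonneg_right (mul_le_mul_of_nonneg_left hXm_inv hD₀.le) hM0
          _ ≤ D₀ * (2 ^ m * X ^ (-(s/2))) * M :=
              mul_le_mul_of_nonneg_right
                (mul_le_mul_of_nonneg_left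
                  (mul_le_mul_of_nonneg_left hXms (by positivity)) hD₀.le) hM0
          _ = a3 * X ^ (-(s/2)) := by rw [ha3_def]; ring
      calc ∫⁻ ξ in (fun ξ : EuclideanSpace ℝ (Fin n) => ‖ξ‖) ⁻¹' Set.Ici ρ₀,
            ENNReal.ofReal (g ξ)
          ≤ ∫⁻ ξ in (fun ξ : EuclideanSpace ℝ (Fin n) => ‖ξ‖) ⁻¹' Set.Ici ρ₀,
            ENNReal.ofReal (D₀ * (t ^ m)⁻¹) * ENNReal.ofReal (w ξ) :=
            setLIntegral_mono' (measurable_norm measurableSet_Ici) hpt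
        _ = ENNReal.ofReal (D₀ * (t ^ m)⁻¹) *
            ∫⁻ ξ in (fun ξ : EuclideanSpace ℝ (Fin n) => ‖ξ‖) ⁻¹' Set.Ici ρ₀,
              ENNReal.ofReal (w ξ) := lintegral_const_mul' _ _ ENNReal.ofReal_ne_top
        _ ≤ ENNReal.ofReal (D₀ * (t ^ m)⁻¹) * ∫⁻ ξ, ENNReal.ofReal (w ξ) :=
            mul_le_mul_right (setLIntegral_le_lintegral _ _) _
        _ = ENNReal.ofReal (D₀ * (t ^ m)⁻¹) * ENNReal.ofReal M := by rw [hMe]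
        _ = ENNReal.ofReal (D₀ * (t ^ m)⁻¹ * M) := (ENNReal.ofReal_mul hconst_nn).symm
        _ ≤ ENNReal.ofReal (a3 * X ^ (-(s/2))) := ENNReal.ofReal_le_ofReal hreal3
    -- combine
    have hXa1 : 0 ≤ a1 * X ^ (-(s/2)) := mul_nonneg ha1 hXs
    have hXa2 : 0 ≤ a2 * X ^ (-(s/2)) := mul_nonneg ha2 hXs
    have hXa3 : 0 ≤ a3 * X ^ (-(s/2)) := mul_nonneg ha3 hXs
    calc ∫⁻ ξ, ENNReal.ofReal (g ξ)
        ≤ ENNReal.ofReal (a1 * X ^ (-(s/2))) +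
          (ENNReal.ofReal (a2 * X ^ (-(s/2))) + ENNReal.ofReal (a3 * X ^ (-(s/2)))) :=
          le_trans hsplit (add_le_add hP1 (add_le_add hP2 hP3))
      _ = ENNReal.ofReal (a1 * X ^ (-(s/2)) + (a2 * X ^ (-(s/2)) + a3 * X ^ (-(s/2)))) := by
          rw [ENNReal.ofReal_add hXa1 (add_nonneg hXa2 hXa3), ENNReal.ofReal_add hXa2 hXa3]
      _ ≤ ENNReal.ofReal (C₂ * X ^ (-(s/2))) := by
          apply ENNReal.ofReal_le_ofReal
          have h9 : a1 + a2 + a3 ≤ C₂ := by rw [hC₂_def]; linarith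
          calc a1 * X ^ (-(s/2)) + (a2 * X ^ (-(s/2)) + a3 * X ^ (-(s/2)))
              = (a1 + a2 + a3) * X ^ (-(s/2)) := by ring
            _ ≤ C₂ * X ^ (-(s/2)) := mul_le_mul_of_nonneg_right h9 hXs
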